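/- Let a < b, let f : [a,b] → ℝ be càdlàg on [a,b], and let c > 0. Then TV^c(f,[a,b]) < ∞ (equivalently, the supremum defining TV^c(f,[a,b]) is finite). -/

import Mathlib

open Set Filter Topology ENNReal

/-- Truncated variation `TV^c(f,[a,b])` as a supremum over partitions, valued in `[0,∞]`. -/
noncomputable def truncVar (f : ℝ → ℝ) (a b c : ℝ) : ℝ≥0∞ :=
  ⨆ (n : ℕ) (t : ℕ → ℝ) (_ : a ≤ t 0) (_ : ∀ i < n, t i < t (i + 1)) (_ : t n ≤ b),
    ∑ i ∈ Finset.range n, ENNReal.ofReal (max (|f (t (i + 1)) - f (t i)| - c) 0)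

/-- Total variation `TV(f,[a,b])`, valued in `[0,∞]`. -/
noncomputable def totalVar (f : ℝ → ℝ) (a b : ℝ) : ℝ≥0∞ := truncVar f a b 0

/-- Upward truncated variation `UTV^c(f,[a,b])`. -/
noncomputable def upTruncVar (f : ℝ → ℝ) (a b c : ℝ) : ℝ≥0∞ :=
  ⨆ (n : ℕ) (t : ℕ → ℝ) (_ : a ≤ t 0) (_ : ∀ i < n, t i < t (i + 1)) (_ : t n ≤ b),
    ∑ i ∈ Finset.range n, ENNReal.ofReal (max (f (t (i + 1)) - f (t i) - c) 0)

/-- Downward truncated variation `DTV^c(f,[a,b])`. -/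
noncomputable def downTruncVar (f : ℝ → ℝ) (a b c : ℝ) : ℝ≥0∞ :=
  ⨆ (n : ℕ) (t : ℕ → ℝ) (_ : a ≤ t 0) (_ : ∀ i < n, t i < t (i + 1)) (_ : t n ≤ b),
    ∑ i ∈ Finset.range n, ENNReal.ofReal (max (f (t i) - f (t (i + 1)) - c) 0)

/-- `f` is càdlàg on `[a,b]`: right-continuous at every point of `[a,b)` and
with a finite left limit at every point of `(a,b]`. -/
def CadlagOn (f : ℝ → ℝ) (a b : ℝ) : Prop :=
  (∀ x ∈ Set.Ico a b, Filter.Tendsto f (𝓝[>] x) (𝓝 (f x))) ∧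
  (∀ x ∈ Set.Ioc a b, ∃ L : ℝ, Filter.Tendsto f (𝓝[<] x) (𝓝 L))

/-- A chain condition implies monotonicity. -/
lemma chain_mono' {t : ℕ → ℝ} {n : ℕ} (h : ∀ i < n, t i < t (i + 1)) :
    ∀ i j, i ≤ j → j ≤ n → t i ≤ t j := by
  intro i j hij
  induction hij with
  | refl => intro _; exact le_rfl
  | @step m h' ih =>
    intro hj
    exact (ih (by omega)).trans (h m (by omega)).le

/-- Existence of a partition with small oscillation on each half-open block,
for a càdlàg function. -/
lemma cadlag_partition (f : ℝ → ℝ) (a b : ℝ) (hab : a ≤ b) (hf : CadlagOn f a b)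
    {ε : ℝ} (hε : 0 < ε) :
    ∃ N : ℕ, ∃ x : ℕ → ℝ, x 0 = a ∧ x N = b ∧ (∀ k < N, x k < x (k + 1)) ∧
      ∀ k < N, ∀ u ∈ Set.Ico (x k) (x (k + 1)), ∀ v ∈ Set.Ico (x k) (x (k + 1)),
        |f u - f v| < ε := by
  classical
  set P : ℝ → Prop := fun t => ∃ N : ℕ, ∃ x : ℕ → ℝ, x 0 = a ∧ x N = t ∧
      (∀ k < N, x k < x (k + 1)) ∧
      ∀ k < N, ∀ u ∈ Set.Ico (x k) (x (k + 1)), ∀ v ∈ Set.Ico (x k) (x (k + 1)),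
        |f u - f v| < ε with hPdef
  have hPa : P a := ⟨0, fun _ => a, rfl, rfl, by omega, by omega⟩
  have happend : ∀ t v : ℝ, P t → t < v →
      (∀ s ∈ Set.Ico t v, ∀ w ∈ Set.Ico t v, |f s - f w| < ε) → P v := by
    rintro t v ⟨N, x, h0, hN, hinc, hosc⟩ htv hosc'
    refine ⟨N + 1, fun k => if k ≤ N then x k else v,
      by simp [h0], by simp, ?_, ?_⟩
    · intro k hk
      rcases Nat.lt_succ_iff_lt_or_eq.mp hk with hk' | rfl
      · simp only [if_pos hk'.le, if_pos (Nat.succ_le_of_lt hk')]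
        exact hinc k hk'
      · simp only [if_pos le_rfl, if_neg (by omega : ¬ k + 1 ≤ k), hN]
        exact htv
    · intro k hk
      rcases Nat.lt_succ_iff_lt_or_eq.mp hk with hk' | rfl
      · simp only [if_pos hk'.le, if_pos (Nat.succ_le_of_lt hk')]
        exact hosc k hk'
      · simp only [if_pos le_rfl, if_neg (by omega : ¬ k + 1 ≤ k), hN]
        exact hosc'
  set S : Set ℝ := {t | t ∈ Set.Icc a b ∧ P t} with hSdef
  have haS : a ∈ S := ⟨⟨le_rfl, hab⟩, hPa⟩
  have hSne : S.Nonempty := ⟨a, haS⟩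
  have hSbdd : BddAbove S := ⟨b, fun t ht => ht.1.2⟩
  set u := sSup S with hu
  have hau : a ≤ u := le_csSup hSbdd haS
  have hub : u ≤ b := csSup_le hSne fun t ht => ht.1.2
  have hPu : P u := by
    rcases eq_or_lt_of_le hau with h | h
    · exact h ▸ hPa
    · obtain ⟨L, hL⟩ := hf.2 u ⟨h, hub⟩
      have hmem : {s : ℝ | |f s - L| < ε / 2} ∈ 𝓝[<] u := by
        have : Metric.ball L (ε / 2) ∈ 𝓝 L := Metric.ball_mem_nhds L (by linarith)
        have := hL this
        simpa [Metric.ball, Real.dist_eq] using this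
      obtain ⟨l, hl, hIoo⟩ := (mem_nhdsLT_iff_exists_Ioo_subset' h).mp hmem
      obtain ⟨t, htS, hlt⟩ := exists_lt_of_lt_csSup hSne (show max l a < u from max_lt hl h)
      have htu : t ≤ u := le_csSup hSbdd htS
      rcases eq_or_lt_of_le htu with rfl | htu'
      · exact htS.2
      · refine happend t u htS.2 htu' ?_
        intro s hs w hw
        have hsI : s ∈ Set.Ioo l u := ⟨lt_of_le_of_lt (le_max_left l a) (lt_of_lt_of_le hlt hs.1), hs.2⟩
        have hwI : w ∈ Set.Ioo l u := ⟨lt_of_le_of_lt (le_max_left l a) (lt_of_lt_of_le hlt hw.1), hw.2⟩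
        have h1 := hIoo hsI
        have h2 := hIoo hwI
        simp only [Set.mem_setOf_eq] at h1 h2
        calc |f s - f w| ≤ |f s - L| + |L - f w| := abs_sub_le _ _ _
          _ = |f s - L| + |f w - L| := by rw [abs_sub_comm L]
          _ < ε := by linarith
  have hSu : u ∈ S := ⟨⟨hau, hub⟩, hPu⟩
  have hueq : u = b := by
    by_contra h
    have hlt : u < b := lt_of_le_of_ne hub h
    have hr := hf.1 u ⟨hau, hlt⟩
    have hmem : {s : ℝ | |f s - f u| < ε / 2} ∈ 𝓝[>] u := by
      have : Metric.ball (f u) (ε / 2) ∈ 𝓝 (f u) := Metric.ball_mem_nhds _ (by linarith)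
      have := hr this
      simpa [Metric.ball, Real.dist_eq] using this
    obtain ⟨r, hr', hIoo⟩ := (mem_nhdsGT_iff_exists_Ioo_subset' hlt).mp hmem
    set v := min ((u + r) / 2) b with hv
    have huv : u < v := lt_min (by simp only [Set.mem_Ioi] at hr'; linarith) hlt
    have hvb : v ≤ b := min_le_right _ _
    have hvr : v < r := by
      simp only [Set.mem_Ioi] at hr'
      calc v ≤ (u + r) / 2 := min_le_left _ _
        _ < r := by linarith
    have hosc : ∀ s ∈ Set.Ico u v, ∀ w ∈ Set.Ico u v, |f s - f w| < ε := by
      have key : ∀ s ∈ Set.Ico u v, |f s - f u| < ε / 2 := by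
        intro s hs
        rcases eq_or_lt_of_le hs.1 with rfl | h'
        · simpa using (by linarith : (0:ℝ) < ε / 2)
        · exact hIoo ⟨h', lt_trans hs.2 hvr⟩
      intro s hs w hw
      have h1 := key s hs
      have h2 := key w hw
      calc |f s - f w| ≤ |f s - f u| + |f u - f w| := abs_sub_le _ _ _
        _ = |f s - f u| + |f w - f u| := by rw [abs_sub_comm (f u)]
        _ < ε := by linarith
    have hPv : P v := happend u v hPu huv hosc
    have : v ≤ u := le_csSup hSbdd ⟨⟨le_trans hau huv.le, hvb⟩, hPv⟩
    exact absurd huv (not_lt_of_ge this)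
  exact hueq ▸ hPu

/-- The truncated variation of a càdlàg function is finite. -/
theorem truncVar_lt_top
    (a b c : ℝ) (hab : a < b) (hc : 0 < c) (f : ℝ → ℝ) (hf : CadlagOn f a b) :
    truncVar f a b c < ⊤ := by
  classical
  obtain ⟨N, x, hx0, hxN, hxinc, hosc⟩ := cadlag_partition f a b hab.le hf hc
  set β : ℝ → ℕ := fun t => Nat.findGreatest (fun k => x k ≤ t) N with hβdef
  have hβ_le : ∀ t, β t ≤ N := fun t => Nat.findGreatest_le N
  have hβ_spec : ∀ t, a ≤ t → x (β t) ≤ t := by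
    intro t ht
    exact Nat.findGreatest_spec (P := fun k => x k ≤ t) (Nat.zero_le N)
      (show x 0 ≤ t by rw [hx0]; exact ht)
  have hβ_lt : ∀ t, a ≤ t → t < b → β t < N := by
    intro t ht htb
    rcases lt_or_eq_of_le (hβ_le t) with h | h
    · exact h
    · exfalso
      have := hβ_spec t ht
      rw [h, hxN] at this
      linarith
  have hβ_gt : ∀ t, a ≤ t → t < b → t < x (β t + 1) := by
    intro t ht htb
    by_contra h
    push_neg at h
    exact Nat.findGreatest_is_greatest (Nat.lt_succ_self _) (hβ_lt t ht htb) h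
  have hβ_mono : ∀ s t, a ≤ s → s ≤ t → β s ≤ β t := by
    intro s t hs hst
    exact Nat.le_findGreatest (hβ_le s) (le_trans (hβ_spec s hs) hst)
  have hβ_b : β b = N :=
    le_antisymm (hβ_le b) (Nat.le_findGreatest le_rfl (by rw [hxN]))
  -- same block gives small increment
  have hsame : ∀ s t, a ≤ s → s ≤ t → t ≤ b → β s = β t → |f t - f s| ≤ c := by
    intro s t hs hst htb hβeq
    rcases eq_or_lt_of_le htb with rfl | htb'
    · rw [hβ_b] at hβeq
      have hxs := hβ_spec s hs
      rw [hβeq, hxN] at hxs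
      have : s = t := le_antisymm hst hxs
      simp [this, hc.le]
    · have hsb : s < b := lt_of_le_of_lt hst htb'
      have hk : β t < N := hβ_lt t (le_trans hs hst) htb'
      have h1 : s ∈ Set.Ico (x (β t)) (x (β t + 1)) :=
        ⟨hβeq ▸ hβ_spec s hs, hβeq ▸ hβ_gt s hs hsb⟩
      have h2 : t ∈ Set.Ico (x (β t)) (x (β t + 1)) :=
        ⟨hβ_spec t (le_trans hs hst), hβ_gt t (le_trans hs hst) htb'⟩
      exact (hosc (β t) hk t h2 s h1).le
  -- boundedness
  set M : ℝ := (Finset.range (N + 1)).sup' ⟨0, by simp⟩ (fun k => |f (x k)|) + c with hMdef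
  have hM : ∀ t, a ≤ t → t ≤ b → |f t| ≤ M := by
    intro t ht htb
    rcases eq_or_lt_of_le htb with rfl | htb'
    · have : |f (x N)| ≤ (Finset.range (N + 1)).sup' ⟨0, by simp⟩ (fun k => |f (x k)|) :=
        Finset.le_sup' (fun k => |f (x k)|) (Finset.mem_range.mpr (Nat.lt_succ_self N))
      rw [hxN] at this
      linarith
    · have hk : β t < N := hβ_lt t ht htb'
      have h1 : t ∈ Set.Ico (x (β t)) (x (β t + 1)) := ⟨hβ_spec t ht, hβ_gt t ht htb'⟩
      have h2 : x (β t) ∈ Set.Ico (x (β t)) (x (β t + 1)) := ⟨le_rfl, hxinc _ hk⟩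
      have h3 := hosc (β t) hk t h1 (x (β t)) h2
      have h4 : |f (x (β t))| ≤ (Finset.range (N + 1)).sup' ⟨0, by simp⟩ (fun k => |f (x k)|) :=
        Finset.le_sup' (fun k => |f (x k)|) (Finset.mem_range.mpr (by omega))
      have : |f t| ≤ |f (x (β t))| + |f t - f (x (β t))| := by
        have := abs_sub_abs_le_abs_sub (f t) (f (x (β t)))
        linarith [abs_nonneg (f t - f (x (β t)))]
      linarith
  have hM0 : 0 ≤ M := le_trans (abs_nonneg (f b)) (hM b hab.le le_rfl)
  set C : ℝ≥0∞ := ENNReal.ofReal (2 * M) with hCdef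
  -- term bound
  have hterm : ∀ s t, a ≤ s → s ≤ t → t ≤ b →
      ENNReal.ofReal (max (|f t - f s| - c) 0) ≤ ((β t - β s : ℕ) : ℝ≥0∞) * C := by
    intro s t hs hst htb
    rcases eq_or_ne (β s) (β t) with hβeq | hβne
    · have := hsame s t hs hst htb hβeq
      have : max (|f t - f s| - c) 0 = 0 := max_eq_right (by linarith)
      rw [this, ENNReal.ofReal_zero]
      exact zero_le
    · have hlt : β s < β t := lt_of_le_of_ne (hβ_mono s t hs hst) hβne
      have h1 : (1 : ℕ) ≤ β t - β s := by omega
      have hb1 : |f t| ≤ M := hM t (le_trans hs hst) htb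
      have hb2 : |f s| ≤ M := hM s hs (le_trans hst htb)
      have habs : |f t - f s| ≤ 2 * M := by
        calc |f t - f s| ≤ |f t| + |f s| := abs_sub _ _
          _ ≤ 2 * M := by linarith
      have hmax : max (|f t - f s| - c) 0 ≤ 2 * M := by
        apply max_le (by linarith) (by linarith)
      calc ENNReal.ofReal (max (|f t - f s| - c) 0) ≤ C := ENNReal.ofReal_le_ofReal hmax
        _ = 1 * C := (one_mul C).symm
        _ ≤ ((β t - β s : ℕ) : ℝ≥0∞) * C := by
            apply mul_le_mul_left
            exact_mod_cast h1
  -- key induction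
  have key : ∀ n (t : ℕ → ℝ), a ≤ t 0 → (∀ i < n, t i < t (i + 1)) → t n ≤ b →
      ∑ i ∈ Finset.range n, ENNReal.ofReal (max (|f (t (i + 1)) - f (t i)| - c) 0) ≤
        ((β (t n) - β (t 0) : ℕ) : ℝ≥0∞) * C := by
    intro n
    induction n with
    | zero => intro t _ _ _; simp
    | succ n ih =>
      intro t h0 hinc hnb
      have hstep : t n < t (n + 1) := hinc n (Nat.lt_succ_self n)
      have htnb : t n ≤ b := le_trans hstep.le hnb
      have h0n : a ≤ t n := le_trans h0 (chain_mono' hinc 0 n (Nat.zero_le n) (Nat.le_succ n))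
      have h1 := ih t h0 (fun i hi => hinc i (hi.trans (Nat.lt_succ_self n))) htnb
      have h2 := hterm (t n) (t (n + 1)) h0n hstep.le hnb
      have hm1 : β (t 0) ≤ β (t n) := hβ_mono (t 0) (t n)
        h0 (chain_mono' hinc 0 n (Nat.zero_le n) (Nat.le_succ n))
      have hm2 : β (t n) ≤ β (t (n + 1)) := hβ_mono (t n) (t (n + 1)) h0n hstep.le
      have hnat : (β (t n) - β (t 0)) + (β (t (n + 1)) - β (t n)) = β (t (n + 1)) - β (t 0) := by
        omega
      rw [Finset.sum_range_succ]
      calc ∑ i ∈ Finset.range n, ENNReal.ofReal (max (|f (t (i + 1)) - f (t i)| - c) 0) +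
            ENNReal.ofReal (max (|f (t (n + 1)) - f (t n)| - c) 0)
          ≤ ((β (t n) - β (t 0) : ℕ) : ℝ≥0∞) * C +
            ((β (t (n + 1)) - β (t n) : ℕ) : ℝ≥0∞) * C := add_le_add h1 h2
        _ = ((β (t (n + 1)) - β (t 0) : ℕ) : ℝ≥0∞) * C := by
            rw [← add_mul, ← Nat.cast_add, hnat]
  -- conclude
  have hCtop : C < ⊤ := ENNReal.ofReal_lt_top
  have hfin : ((N : ℝ≥0∞) * C) < ⊤ :=
    ENNReal.mul_lt_top (by simp) hCtop
  refine lt_of_le_of_lt ?_ hfin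
  rw [truncVar]
  refine iSup_le fun n => iSup_le fun t => iSup_le fun h0 => iSup_le fun hinc =>
    iSup_le fun hnb => ?_
  refine le_trans (key n t h0 hinc hnb) (mul_le_mul_left ?_ C)
  exact_mod_cast le_trans (Nat.sub_le _ _) (hβ_le (t n))
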